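/- arXiv:2002.08411 — 2 statements merged into one kernel-verified Lean document; each statement's English description precedes it below -/
import Mathlib

section
/- Let A be a Dedekind domain, let r ≥ 2 be an integer, and let 𝔪 be a nonzero ideal of A such that A/𝔪 is finite. Then there exists a real constant c > 0 (depending only on A, r and 𝔪) such that for every nonzero ideal 𝔞 of A with A/𝔞 finite and every subgroup G of GL_r(A/𝔞) which equals the full preimage of its image under the natural projection GL_r(A/𝔞) → GL_r(A/(𝔞 + 𝔪)), one has c · |A/𝔞|^(r²−1) · (∏_{𝔭 prime ideal, 𝔞 ⊆ 𝔭} ∏_{i=2}^{r} (1 − |A/𝔭|^(−i))) · |Scal_G| ≤ |G| ≤ |A/𝔞|^(r²−1) · |Scal_G|. -/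
open Function

section Generic
variable {G H : Type*} [Group G] [Group H]

lemma card_eq_ker_mul_of_surjective (f : G →* H) (hf : Surjective f) :
    Nat.card G = Nat.card f.ker * Nat.card H := by
  rw [Subgroup.card_eq_card_quotient_mul_card_subgroup f.ker, mul_comm,
    Nat.card_congr (QuotientGroup.quotientKerEquivOfSurjective f hf).toEquiv]

lemma card_eq_ker_mul_range (f : G →* H) :
    Nat.card G = Nat.card f.ker * Nat.card f.range := by
  rw [Subgroup.card_eq_card_quotient_mul_card_subgroup f.ker, mul_comm,
    Nat.card_congr (QuotientGroup.quotientKerEquivRange f).toEquiv]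

lemma card_eq_addker_mul_of_surjective {G H : Type*} [AddGroup G] [AddGroup H]
    (f : G →+ H) (hf : Surjective f) :
    Nat.card G = Nat.card f.ker * Nat.card H := by
  rw [AddSubgroup.card_eq_card_quotient_mul_card_addSubgroup f.ker, mul_comm,
    Nat.card_congr (QuotientAddGroup.quotientKerEquivOfSurjective f hf).toEquiv]

end Generic

section UnitsMap
variable {R S : Type*} [Ring R] [Ring S]

lemma units_map_surjective (g : R →+* S) (hg : Surjective g)
    (hloc : ∀ a, IsUnit (g a) → IsUnit a) :
    Surjective (Units.map (g : R →* S)) := by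
  intro u
  obtain ⟨a, ha⟩ := hg u.val
  have hu : IsUnit a := hloc a (by rw [ha]; exact u.isUnit)
  refine ⟨hu.unit, Units.ext ?_⟩
  simp [ha]

noncomputable def kerUnitsEquiv (g : R →+* S) (hloc : ∀ a, IsUnit (g a) → IsUnit a) :
    (Units.map (g : R →* S)).ker ≃ {a : R // g a = 1} where
  toFun x := ⟨(x : Rˣ).val, congrArg Units.val (MonoidHom.mem_ker.mp x.2)⟩
  invFun a := ⟨(hloc a.1 (by rw [a.2]; exact isUnit_one)).unit, by
    rw [MonoidHom.mem_ker]
    ext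
    simp [a.2]⟩
  left_inv x := Subtype.ext (Units.ext (by simp))
  right_inv a := Subtype.ext (by simp)

noncomputable def oneSubEquiv (g : R →+* S) :
    {a : R // g a = 1} ≃ {a : R // g a = 0} :=
  (Equiv.subRight (1 : R)).subtypeEquiv fun a => by
    simp [map_sub, sub_eq_zero]

end UnitsMap
open Function

section MatrixMap
variable {R S : Type*} [CommRing R] [CommRing S] (n : ℕ)

lemma mapMatrix_surjective (g : R →+* S) (hg : Surjective g) :
    Surjective (g.mapMatrix : Matrix (Fin n) (Fin n) R →+* Matrix (Fin n) (Fin n) S) := by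
  intro M
  refine ⟨Matrix.of fun i j => (hg (M i j)).choose, ?_⟩
  ext i j
  exact (hg (M i j)).choose_spec

lemma mapMatrix_isUnit (g : R →+* S) (hloc : ∀ a, IsUnit (g a) → IsUnit a)
    (M : Matrix (Fin n) (Fin n) R) (h : IsUnit (g.mapMatrix M)) : IsUnit M := by
  rw [Matrix.isUnit_iff_isUnit_det] at h ⊢
  exact hloc _ (by rwa [RingHom.map_det])

/-- matrices with entries satisfying a predicate -/
def matrixSubtypeEquiv (p : R → Prop) :
    {M : Matrix (Fin n) (Fin n) R // ∀ i j, p (M i j)} ≃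
      (Fin n → Fin n → {a : R // p a}) :=
  ((Equiv.subtypePiEquivPi (p := fun (_ : Fin n) (v : Fin n → R) => ∀ j, p (v j))).trans
    (Equiv.piCongrRight fun _ => Equiv.subtypePiEquivPi) :
      {M : Fin n → Fin n → R // ∀ i j, p (M i j)} ≃ (Fin n → Fin n → {a : R // p a}))

lemma card_matrix_zero (g : R →+* S) :
    Nat.card {M : Matrix (Fin n) (Fin n) R // g.mapMatrix M = 0} =
      Nat.card {a : R // g a = 0} ^ (n ^ 2) := by
  have e1 : {M : Matrix (Fin n) (Fin n) R // g.mapMatrix M = 0} ≃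
      {M : Matrix (Fin n) (Fin n) R // ∀ i j, g (M i j) = 0} := by
    refine Equiv.subtypeEquivRight fun M => ?_
    constructor
    · intro h i j
      have := congrFun (congrFun (congrArg (fun N : Matrix (Fin n) (Fin n) S => (N : Matrix (Fin n) (Fin n) S)) h) i) j
      simpa [RingHom.mapMatrix_apply, Matrix.map_apply] using this
    · intro h
      ext i j
      simpa [RingHom.mapMatrix_apply, Matrix.map_apply] using h i j
  rw [Nat.card_congr (e1.trans (matrixSubtypeEquiv n (fun a => g a = 0))),
    Nat.card_fun, Nat.card_fun, Nat.card_eq_fintype_card (α := Fin n), Fintype.card_fin,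
    ← pow_mul, sq]

end MatrixMap
open Function

/-- Matrices over a product ring = product of matrix rings. -/
noncomputable def matrixPiEquiv {ι : Type*} (R : ι → Type*) [∀ i, CommRing (R i)]
    (n : ℕ) : Matrix (Fin n) (Fin n) (∀ i, R i) ≃+* ∀ i, Matrix (Fin n) (Fin n) (R i) := by
  refine RingEquiv.ofBijective (Pi.ringHom fun i => (Pi.evalRingHom R i).mapMatrix) ⟨?_, ?_⟩
  · intro M N h
    ext i j k
    have h2 : ((Pi.ringHom fun i => (Pi.evalRingHom R i).mapMatrix) M) k i j =
        ((Pi.ringHom fun i => (Pi.evalRingHom R i).mapMatrix) N) k i j := by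
      rw [h]
    exact h2
  · intro F
    exact ⟨Matrix.of fun i j k => F k i j, rfl⟩

/-- Units of a product of monoids. -/
def unitsPiEquiv {ι : Type*} (M : ι → Type*) [∀ i, Monoid (M i)] :
    (∀ i, M i)ˣ ≃* ∀ i, (M i)ˣ where
  toFun u i := ⟨u.val i, u.inv i, congrFun u.val_inv i, congrFun u.inv_val i⟩
  invFun v := ⟨fun i => (v i).val, fun i => (v i).inv,
    funext fun i => (v i).val_inv, funext fun i => (v i).inv_val⟩
  left_inv u := Units.ext rfl
  right_inv v := funext fun i => Units.ext rfl
  map_mul' u v := funext fun i => Units.ext rfl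

lemma card_units_pi {ι : Type*} [Fintype ι] (M : ι → Type*) [∀ i, Monoid (M i)] :
    Nat.card (∀ i, M i)ˣ = ∏ i, Nat.card (M i)ˣ := by
  rw [Nat.card_congr (unitsPiEquiv M).toEquiv, Nat.card_pi]

lemma card_units_congr {R S : Type*} [Ring R] [Ring S] (e : R ≃+* S) :
    Nat.card Rˣ = Nat.card Sˣ :=
  Nat.card_congr (Units.mapEquiv e.toMulEquiv).toEquiv
section key2
variable {R S : Type*} [Ring R] [Ring S]
lemma card_units_map (g : R →+* S) (hg : Surjective g)
    (hloc : ∀ a, IsUnit (g a) → IsUnit a) :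
    Nat.card Rˣ = Nat.card {a : R // g a = 0} * Nat.card Sˣ := by
  have h := card_eq_ker_mul_of_surjective (Units.map (g : R →* S))
    (units_map_surjective g hg hloc)
  rw [h, Nat.card_congr ((kerUnitsEquiv g hloc).trans
    ((Equiv.subRight (1 : R)).subtypeEquiv (q := fun b => g b = 0) fun a => by
      show g a = 1 ↔ g (a - 1) = 0
      rw [map_sub, map_one, sub_eq_zero]))]
end key2
open Function Finset

-- real manipulation of the GL(F_q) cardinality
lemma real_gl_prod (q r : ℕ) (hq : 1 ≤ q) :
    ((∏ i : Fin r, (q ^ r - q ^ (i : ℕ)) : ℕ) : ℝ) =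
      (q : ℝ) ^ (r ^ 2) * ∏ i ∈ Icc 1 r, (1 - ((q : ℝ))⁻¹ ^ i) := by
  have hq0 : (q : ℝ) ≠ 0 := by positivity
  rw [Nat.cast_prod, Fin.prod_univ_eq_prod_range (fun i => ((q ^ r - q ^ i : ℕ) : ℝ))]
  have hcast : ∀ i ∈ range r, ((q ^ r - q ^ i : ℕ) : ℝ) =
      (q : ℝ) ^ r * (1 - ((q : ℝ))⁻¹ ^ (r - i)) := by
    intro i hi
    have hir : i ≤ r := (mem_range.mp hi).le
    rw [Nat.cast_sub (Nat.pow_le_pow_right hq hir)]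
    push_cast
    rw [mul_sub, mul_one, inv_pow, ← pow_sub₀ _ hq0 (Nat.sub_le r i),
      Nat.sub_sub_self hir]
  rw [Finset.prod_congr rfl hcast, Finset.prod_mul_distrib, Finset.prod_const,
    Finset.card_range, ← pow_mul, ← sq]
  congr 1
  have h1 : ∀ j, (1 : ℝ) - (q : ℝ)⁻¹ ^ (r - j) = (fun k => 1 - (q:ℝ)⁻¹ ^ k) (r - j) := fun _ => rfl
  calc ∏ i ∈ range r, ((1:ℝ) - (q : ℝ)⁻¹ ^ (r - i))
      = ∏ i ∈ range r, ((1:ℝ) - (q : ℝ)⁻¹ ^ (r - 1 - i + 1)) := by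
        refine Finset.prod_congr rfl fun i hi => ?_
        have h2 := mem_range.mp hi
        have h3 : r - i = r - 1 - i + 1 := by omega
        rw [h3]
    _ = ∏ i ∈ range r, ((1:ℝ) - (q : ℝ)⁻¹ ^ (i + 1)) :=
        Finset.prod_range_reflect (fun j => (1:ℝ) - (q : ℝ)⁻¹ ^ (j + 1)) r
    _ = ∏ i ∈ Icc 1 r, ((1:ℝ) - (q : ℝ)⁻¹ ^ i) := by
        rw [← Finset.Ico_add_one_right_eq_Icc, Finset.prod_Ico_eq_prod_range]
        simp [add_comm]

lemma card_units_matrix_map {R S : Type*} [CommRing R] [CommRing S] (n : ℕ) (g : R →+* S)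
    (hg : Surjective g) (hloc : ∀ a, IsUnit (g a) → IsUnit a) :
    Nat.card (Matrix (Fin n) (Fin n) R)ˣ =
      Nat.card {a : R // g a = 0} ^ (n ^ 2) * Nat.card (Matrix (Fin n) (Fin n) S)ˣ := by
  rw [card_units_map (g.mapMatrix) (mapMatrix_surjective n g hg) (mapMatrix_isUnit n g hloc),
    card_matrix_zero]

section Local
open Function Finset Submodule

variable {A : Type*} [CommRing A] [IsDomain A] [IsDedekindDomain A]
variable (P : Ideal A) [P.IsPrime]

lemma factor_pow_surj (d : ℕ) :
    Surjective (Ideal.Quotient.factor (S := P ^ (d + 1)) (T := P) (Ideal.pow_le_self (Nat.succ_ne_zero d))) := by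
  intro x
  obtain ⟨a, rfl⟩ := Ideal.Quotient.mk_surjective x
  exact ⟨Ideal.Quotient.mk _ a, Ideal.Quotient.factor_mk _ _⟩

lemma factor_pow_isUnit (hP : P ≠ ⊥) (d : ℕ) (x : A ⧸ P ^ (d + 1))
    (h : IsUnit (Ideal.Quotient.factor (S := P ^ (d + 1)) (T := P) (Ideal.pow_le_self (Nat.succ_ne_zero d)) x)) :
    IsUnit x := by
  obtain ⟨a, rfl⟩ := Ideal.Quotient.mk_surjective x
  rw [Ideal.Quotient.factor_mk] at h
  have haP : a ∉ P := by
    intro hmem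
    rw [Ideal.Quotient.eq_zero_iff_mem.mpr hmem] at h
    exact not_isUnit_zero h
  have hmax : P.IsMaximal := Ideal.IsPrime.isMaximal inferInstance hP
  obtain ⟨y, i, hiP, hyi⟩ := hmax.exists_inv haP
  have hsup : Ideal.span {a} ⊔ P = ⊤ := by
    rw [Ideal.eq_top_iff_one]
    have h1 : y * a ∈ Ideal.span {a} := Ideal.mem_span_singleton'.mpr ⟨y, rfl⟩
    have h2 := Submodule.add_mem_sup h1 hiP
    rwa [hyi] at h2
  have hcop : IsCoprime (Ideal.span {a}) (P ^ (d + 1)) :=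
    (Ideal.isCoprime_iff_sup_eq.mpr hsup).pow_right
  have h1 : (1 : A) ∈ Ideal.span {a} ⊔ P ^ (d + 1) := by
    rw [hcop.sup_eq]; trivial
  obtain ⟨u, hu, v, hv, huv⟩ := Submodule.mem_sup.mp h1
  obtain ⟨b, rfl⟩ := Ideal.mem_span_singleton'.mp hu
  refine IsUnit.of_mul_eq_one (Ideal.Quotient.mk _ b) ?_
  have hba : b * a = 1 - v := eq_sub_of_add_eq huv
  rw [← map_mul, mul_comm, hba, map_sub, map_one,
    Ideal.Quotient.eq_zero_iff_mem.mpr hv, sub_zero]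

lemma card_quot_pow (hP : P ≠ ⊥) (e : ℕ) :
    Nat.card (A ⧸ P ^ e) = Nat.card (A ⧸ P) ^ e := by
  have h := cardQuot_pow_of_prime (P := P) hP (i := e)
  rwa [cardQuot_apply, cardQuot_apply] at h

lemma card_factor_pow_ker (hP : P ≠ ⊥) (d : ℕ) [Finite (A ⧸ P ^ (d + 1))] :
    Nat.card {x : A ⧸ P ^ (d + 1) //
        Ideal.Quotient.factor (S := P ^ (d + 1)) (T := P) (Ideal.pow_le_self (Nat.succ_ne_zero d)) x = 0} =
      Nat.card (A ⧸ P) ^ d := by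
  set f := Ideal.Quotient.factor (S := P ^ (d + 1)) (T := P) (Ideal.pow_le_self (Nat.succ_ne_zero d))
  have hsurj : Surjective f := factor_pow_surj P d
  have hfinP : Finite (A ⧸ P) := Finite.of_surjective f hsurj
  have h := card_eq_addker_mul_of_surjective f.toAddMonoidHom hsurj
  have e1 : {x : A ⧸ P ^ (d + 1) // f x = 0} ≃ f.toAddMonoidHom.ker :=
    Equiv.subtypeEquivRight fun x => Iff.rfl
  have hq : 0 < Nat.card (A ⧸ P) := Nat.card_pos
  have h2 : Nat.card (A ⧸ P) ^ (d + 1) =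
      Nat.card {x : A ⧸ P ^ (d + 1) // f x = 0} * Nat.card (A ⧸ P) := by
    rw [← card_quot_pow P hP, Nat.card_congr e1, h]
  rw [pow_succ] at h2
  exact Nat.eq_of_mul_eq_mul_right hq h2.symm

lemma loc_card_units (hP : P ≠ ⊥) (d : ℕ) [Finite (A ⧸ P ^ (d + 1))] :
    (Nat.card (A ⧸ P ^ (d + 1))ˣ : ℝ) =
      (Nat.card (A ⧸ P ^ (d + 1)) : ℝ) * (1 - ((Nat.card (A ⧸ P) : ℝ))⁻¹) := by
  set f := Ideal.Quotient.factor (S := P ^ (d + 1)) (T := P) (Ideal.pow_le_self (Nat.succ_ne_zero d))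
  have hsurj : Surjective f := factor_pow_surj P d
  have hfinP : Finite (A ⧸ P) := Finite.of_surjective f hsurj
  have hmax : P.IsMaximal := Ideal.IsPrime.isMaximal inferInstance hP
  letI := Ideal.Quotient.field P
  have h := card_units_map f hsurj (factor_pow_isUnit P hP d)
  rw [card_factor_pow_ker P hP d, Nat.card_units] at h
  have hq1 : 1 ≤ Nat.card (A ⧸ P) := Nat.card_pos
  have hq0 : ((Nat.card (A ⧸ P) : ℝ)) ≠ 0 := by positivity
  rw [h, card_quot_pow P hP]
  rw [Nat.cast_mul, Nat.cast_pow, Nat.cast_sub hq1, Nat.cast_pow]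
  field_simp
  ring

lemma loc_card_GL (hP : P ≠ ⊥) (d : ℕ) [Finite (A ⧸ P ^ (d + 1))] (r : ℕ) :
    (Nat.card (Matrix (Fin r) (Fin r) (A ⧸ P ^ (d + 1)))ˣ : ℝ) =
      (Nat.card (A ⧸ P ^ (d + 1)) : ℝ) ^ (r ^ 2) *
        ∏ i ∈ Icc 1 r, (1 - ((Nat.card (A ⧸ P) : ℝ))⁻¹ ^ i) := by
  set f := Ideal.Quotient.factor (S := P ^ (d + 1)) (T := P) (Ideal.pow_le_self (Nat.succ_ne_zero d))
  have hsurj : Surjective f := factor_pow_surj P d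
  have hfinP : Finite (A ⧸ P) := Finite.of_surjective f hsurj
  have hmax : P.IsMaximal := Ideal.IsPrime.isMaximal inferInstance hP
  letI := Ideal.Quotient.field P
  letI : Fintype (A ⧸ P) := Fintype.ofFinite _
  have h := card_units_matrix_map r f hsurj (factor_pow_isUnit P hP d)
  have hGL : Nat.card (Matrix (Fin r) (Fin r) (A ⧸ P))ˣ =
      ∏ i : Fin r, (Fintype.card (A ⧸ P) ^ r - Fintype.card (A ⧸ P) ^ (i : ℕ)) :=
    Matrix.card_GL_field r
  rw [hGL, card_factor_pow_ker P hP d] at h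
  have hq1 : 1 ≤ Nat.card (A ⧸ P) := Nat.card_pos
  have hq0 : ((Nat.card (A ⧸ P) : ℝ)) ≠ 0 := by positivity
  have hfc : Fintype.card (A ⧸ P) = Nat.card (A ⧸ P) := (Nat.card_eq_fintype_card).symm
  rw [h, Nat.cast_mul, Nat.cast_pow, Nat.cast_pow]
  rw [hfc] at *
  rw [real_gl_prod _ r hq1, card_quot_pow P hP]
  rw [Nat.cast_pow, ← mul_assoc]
  congr 1
  rw [← pow_mul, ← pow_mul, ← pow_add]
  congr 1
  ring

end Local

section Global
open Function Finset Submodule UniqueFactorizationMonoid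
open scoped Classical

variable {A : Type*} [CommRing A] [IsDomain A] [IsDedekindDomain A]

lemma loc_card_units' (P : Ideal A) [P.IsPrime] (hP : P ≠ ⊥) (e : ℕ) (he : e ≠ 0)
    [Finite (A ⧸ P ^ e)] :
    (Nat.card (A ⧸ P ^ e)ˣ : ℝ) =
      (Nat.card (A ⧸ P ^ e) : ℝ) * (1 - ((Nat.card (A ⧸ P) : ℝ))⁻¹) := by
  obtain ⟨d, rfl⟩ : ∃ d, e = d + 1 := ⟨e - 1, by omega⟩
  exact loc_card_units P hP d

lemma loc_card_GL' (P : Ideal A) [P.IsPrime] (hP : P ≠ ⊥) (e : ℕ) (he : e ≠ 0)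
    [Finite (A ⧸ P ^ e)] (r : ℕ) :
    (Nat.card (Matrix (Fin r) (Fin r) (A ⧸ P ^ e))ˣ : ℝ) =
      (Nat.card (A ⧸ P ^ e) : ℝ) ^ (r ^ 2) *
        ∏ i ∈ Icc 1 r, (1 - ((Nat.card (A ⧸ P) : ℝ))⁻¹ ^ i) := by
  obtain ⟨d, rfl⟩ : ∃ d, e = d + 1 := ⟨e - 1, by omega⟩
  exact loc_card_GL P hP d r

lemma pow_count_dvd (𝔞 : Ideal A) (h𝔞 : 𝔞 ≠ ⊥) (P : Ideal A) :
    P ^ ((factors 𝔞).count P) ∣ 𝔞 := by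
  have hle : Multiset.replicate ((factors 𝔞).count P) P ≤ factors 𝔞 :=
    Multiset.le_count_iff_replicate_le.mp le_rfl
  have hdvd := Multiset.prod_dvd_prod_of_le hle
  rwa [Multiset.prod_replicate, associated_iff_eq.mp (factors_prod h𝔞)] at hdvd

lemma finite_quot_of_le {I J : Ideal A} (h : I ≤ J) [Finite (A ⧸ I)] : Finite (A ⧸ J) :=
  Finite.of_surjective (Ideal.Quotient.factor (S := I) (T := J) h) fun x => by
    obtain ⟨a, rfl⟩ := Ideal.Quotient.mk_surjective x
    exact ⟨Ideal.Quotient.mk _ a, Ideal.Quotient.factor_mk _ _⟩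

lemma global_counts (𝔞 : Ideal A) (h𝔞 : 𝔞 ≠ ⊥) [Finite (A ⧸ 𝔞)] (r : ℕ) :
    (Nat.card (Matrix (Fin r) (Fin r) (A ⧸ 𝔞))ˣ : ℝ) =
      (Nat.card (A ⧸ 𝔞) : ℝ) ^ (r ^ 2) *
        ∏ P ∈ (factors 𝔞).toFinset, ∏ i ∈ Icc 1 r, (1 - ((Nat.card (A ⧸ P) : ℝ))⁻¹ ^ i) ∧
    (Nat.card (A ⧸ 𝔞)ˣ : ℝ) =
      (Nat.card (A ⧸ 𝔞) : ℝ) *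
        ∏ P ∈ (factors 𝔞).toFinset, (1 - ((Nat.card (A ⧸ P) : ℝ))⁻¹) := by
  classical
  set T := (factors 𝔞).toFinset with hT
  set e : Ideal A → ℕ := fun P => (factors 𝔞).count P with he
  have hprime : ∀ P ∈ T, Prime P := fun P hP => prime_of_factor _ (Multiset.mem_toFinset.mp hP)
  haveI : ∀ P : T, (P : Ideal A).IsPrime := fun P => Ideal.isPrime_of_prime (hprime _ P.2)
  have hbot : ∀ P ∈ T, P ≠ ⊥ := fun P hP => by
    simpa using (hprime P hP).ne_zero
  have hene : ∀ P ∈ T, e P ≠ 0 := fun P hP => by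
    simp only [he]
    exact Multiset.count_ne_zero.mpr (Multiset.mem_toFinset.mp hP)
  haveI hfin : ∀ P : T, Finite (A ⧸ (P : Ideal A) ^ e P) := fun P =>
    finite_quot_of_le (Ideal.dvd_iff_le.mp (pow_count_dvd 𝔞 h𝔞 P)) 
  -- the CRT equivalence
  have Φ := IsDedekindDomain.quotientEquivPiFactors h𝔞
  -- cardinality of the ring
  have hcardring : (Nat.card (A ⧸ 𝔞) : ℝ) =
      ∏ P ∈ T, (Nat.card (A ⧸ P ^ e P) : ℝ) := by
    rw [Nat.card_congr Φ.toEquiv, Nat.card_pi, Nat.cast_prod, ← Finset.prod_coe_sort T]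
  -- cardinality of units
  have hcardunits : (Nat.card (A ⧸ 𝔞)ˣ : ℕ) =
      ∏ P ∈ T, Nat.card (A ⧸ P ^ e P)ˣ := by
    rw [card_units_congr Φ, card_units_pi, ← Finset.prod_coe_sort T]
  have hcardGL : (Nat.card (Matrix (Fin r) (Fin r) (A ⧸ 𝔞))ˣ : ℕ) =
      ∏ P ∈ T, Nat.card (Matrix (Fin r) (Fin r) (A ⧸ P ^ e P))ˣ := by
    rw [card_units_congr (Φ.mapMatrix.trans (matrixPiEquiv _ r)), card_units_pi,
      ← Finset.prod_coe_sort T]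
  constructor
  · rw [hcardGL, Nat.cast_prod,
      Finset.prod_congr rfl (fun P hP => by
        haveI : (P : Ideal A).IsPrime := Ideal.isPrime_of_prime (hprime _ hP)
        haveI : Finite (A ⧸ P ^ e P) :=
          finite_quot_of_le (Ideal.dvd_iff_le.mp (pow_count_dvd 𝔞 h𝔞 P))
        exact loc_card_GL' P (hbot P hP) (e P) (hene P hP) r),
      Finset.prod_mul_distrib, hcardring, Finset.prod_pow]
  · rw [hcardunits, Nat.cast_prod,
      Finset.prod_congr rfl (fun P hP => by
        haveI : (P : Ideal A).IsPrime := Ideal.isPrime_of_prime (hprime _ hP)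
        haveI : Finite (A ⧸ P ^ e P) :=
          finite_quot_of_le (Ideal.dvd_iff_le.mp (pow_count_dvd 𝔞 h𝔞 P))
        exact loc_card_units' P (hbot P hP) (e P) (hene P hP)),
      Finset.prod_mul_distrib, hcardring]
end Global

/-- The subgroup of scalar matrices `{λ·I : λ ∈ Rˣ}` inside `GL n R`. -/
def scalarSubgroup (n : Type*) [DecidableEq n] [Fintype n] (R : Type*) [CommRing R] :
    Subgroup (Matrix.GeneralLinearGroup n R) :=
  (Units.map (Matrix.scalar n).toMonoidHom).range

/-- The projection `GL_r(A/𝔞) → GL_r(A/(𝔞+𝔪))` induced by the canonical surjection of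
quotient rings (note `𝔞 + 𝔪 = 𝔞 ⊔ 𝔪` as ideals). -/
def glFactor {A : Type*} [CommRing A] (r : ℕ) (𝔞 𝔪 : Ideal A) :
    Matrix.GeneralLinearGroup (Fin r) (A ⧸ 𝔞) →*
      Matrix.GeneralLinearGroup (Fin r) (A ⧸ (𝔞 ⊔ 𝔪)) :=
  Matrix.GeneralLinearGroup.map (Ideal.Quotient.factor (S := 𝔞) (T := 𝔞 ⊔ 𝔪) le_sup_left)

section FinalHelpers
open Function

variable {n : Type*} [DecidableEq n] [Fintype n] {R : Type*} [CommRing R]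

lemma scalarSubgroup_normal : (scalarSubgroup n R).Normal := by
  constructor
  intro z hz g
  obtain ⟨u, rfl⟩ := hz
  have hcomm : g * (Units.map (Matrix.scalar n).toMonoidHom u) =
      (Units.map (Matrix.scalar n).toMonoidHom u) * g := by
    apply Units.ext
    simp only [Units.val_mul, Units.coe_map, RingHom.toMonoidHom_eq_coe,
      MonoidHom.coe_coe]
    exact (Matrix.scalar_commute (u : R) (fun r' => Commute.all _ _) (g : Matrix n n R)).symm
  have : g * (Units.map (Matrix.scalar n).toMonoidHom u) * g⁻¹ =
      (Units.map (Matrix.scalar n).toMonoidHom u) := by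
    rw [hcomm, mul_assoc, mul_inv_cancel, mul_one]
  rw [this]
  exact ⟨u, rfl⟩

lemma card_scalarSubgroup (h : Nonempty n) :
    Nat.card (scalarSubgroup n R) = Nat.card Rˣ := by
  refine (Nat.card_congr (MonoidHom.ofInjective ?_).toEquiv).symm
  apply Units.map_injective
  intro a b hab
  obtain ⟨i⟩ := h
  have := congrFun (congrFun (congrArg (fun M : Matrix n n R => (M : Matrix n n R)) hab) i) i
  simpa [Matrix.scalar_apply, Matrix.diagonal_apply_eq] using this

/-- card of the intersection with a subgroup `G` via the subgroupOf equiv -/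
def infEquiv {G : Type*} [Group G] (H K : Subgroup G) : (K.subgroupOf H) ≃ (H ⊓ K : Subgroup G) where
  toFun x := ⟨x.1.1, Subgroup.mem_inf.mpr ⟨x.1.2, x.2⟩⟩
  invFun y := ⟨⟨y.1, (Subgroup.mem_inf.mp y.2).1⟩, by
    have := (Subgroup.mem_inf.mp y.2).2
    simpa [Subgroup.mem_subgroupOf] using this⟩
  left_inv x := by ext; rfl
  right_inv y := by ext; rfl

end FinalHelpers

open Function Finset Submodule UniqueFactorizationMonoid in
/-- Let `A` be a Dedekind domain, `r ≥ 2`, and `𝔪` a nonzero ideal of `A` with `A/𝔪` finite.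
There is a constant `c > 0` (depending only on `A`, `r`, `𝔪`) such that for every nonzero
ideal `𝔞` with `A/𝔞` finite and every subgroup `G ≤ GL_r(A/𝔞)` equal to the full preimage of
its image in `GL_r(A/(𝔞+𝔪))`, one has
`c · |A/𝔞|^(r²−1) · ∏_{𝔭 ⊇ 𝔞 prime} ∏_{i=2}^r (1 − |A/𝔭|⁻ⁱ) · |Scal_G| ≤ |G| ≤ |A/𝔞|^(r²−1) · |Scal_G|`. -/
theorem degree_bounds_dedekind (A : Type*) [CommRing A] [IsDomain A] [IsDedekindDomain A]
    (r : ℕ) (hr : 2 ≤ r) (𝔪 : Ideal A) (h𝔪 : 𝔪 ≠ ⊥) (h𝔪fin : Finite (A ⧸ 𝔪)) :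
    ∃ c : ℝ, 0 < c ∧
      ∀ 𝔞 : Ideal A, 𝔞 ≠ ⊥ → Finite (A ⧸ 𝔞) →
        ∀ G : Subgroup (Matrix.GeneralLinearGroup (Fin r) (A ⧸ 𝔞)),
          G = Subgroup.comap (glFactor r 𝔞 𝔪) (Subgroup.map (glFactor r 𝔞 𝔪) G) →
          c * (Nat.card (A ⧸ 𝔞) : ℝ) ^ (r ^ 2 - 1) *
              (∏ᶠ (𝔭 : Ideal A) (_ : 𝔭.IsPrime ∧ 𝔞 ≤ 𝔭),
                ∏ i ∈ Finset.Icc 2 r, (1 - ((Nat.card (A ⧸ 𝔭) : ℝ))⁻¹ ^ i)) *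
              (Nat.card (G ⊓ scalarSubgroup (Fin r) (A ⧸ 𝔞) : Subgroup _) : ℝ)
            ≤ (Nat.card G : ℝ) ∧
          (Nat.card G : ℝ)
            ≤ (Nat.card (A ⧸ 𝔞) : ℝ) ^ (r ^ 2 - 1) *
              (Nat.card (G ⊓ scalarSubgroup (Fin r) (A ⧸ 𝔞) : Subgroup _) : ℝ) := by
  classical
  haveI := h𝔪fin
  have hmpos : (0:ℝ) < (Nat.card (A ⧸ 𝔪) : ℝ) := by exact_mod_cast Nat.card_pos
  refine ⟨((Nat.card (A ⧸ 𝔪) : ℝ) ^ (r * r))⁻¹, by positivity, ?_⟩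
  intro 𝔞 h𝔞 hfin G hG
  haveI := hfin
  haveI hfinS : Finite (A ⧸ (𝔞 ⊔ 𝔪)) := finite_quot_of_le (le_sup_left : 𝔞 ≤ 𝔞 ⊔ 𝔪)
  haveI : Finite (Matrix.GeneralLinearGroup (Fin r) (A ⧸ 𝔞)) :=
    inferInstanceAs (Finite (Matrix (Fin r) (Fin r) (A ⧸ 𝔞))ˣ)
  haveI : Finite (Matrix.GeneralLinearGroup (Fin r) (A ⧸ (𝔞 ⊔ 𝔪))) :=
    inferInstanceAs (Finite (Matrix (Fin r) (Fin r) (A ⧸ (𝔞 ⊔ 𝔪)))ˣ)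
  set T := (factors 𝔞).toFinset with hT
  -- local cardinalities are at least 2
  have hqfacts : ∀ P ∈ T, 2 ≤ Nat.card (A ⧸ P) := by
    intro P hP
    have hprime : Prime P := prime_of_factor _ (Multiset.mem_toFinset.mp hP)
    haveI : P.IsPrime := Ideal.isPrime_of_prime hprime
    haveI : Finite (A ⧸ P) :=
      finite_quot_of_le (Ideal.le_of_dvd (dvd_of_mem_factors (Multiset.mem_toFinset.mp hP)))
    haveI : Nontrivial (A ⧸ P) := Ideal.Quotient.nontrivial_iff.mpr (Ideal.IsPrime.ne_top ‹_›)
    exact Finite.one_lt_card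
  have hfactor01 : ∀ P ∈ T, ∀ i : ℕ, 1 ≤ i →
      0 < 1 - ((Nat.card (A ⧸ P) : ℝ))⁻¹ ^ i ∧ 1 - ((Nat.card (A ⧸ P) : ℝ))⁻¹ ^ i ≤ 1 := by
    intro P hP i hi
    have hq : (2:ℝ) ≤ (Nat.card (A ⧸ P) : ℝ) := by exact_mod_cast hqfacts P hP
    have h0 : (0:ℝ) ≤ ((Nat.card (A ⧸ P) : ℝ))⁻¹ := by positivity
    have h1 : ((Nat.card (A ⧸ P) : ℝ))⁻¹ < 1 := by
      rw [inv_lt_one_iff₀]; right; linarith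
    constructor
    · have := pow_lt_one₀ h0 h1 (by omega : i ≠ 0)
      linarith
    · have := pow_nonneg h0 i
      linarith
  set rr : ℝ := (Nat.card (A ⧸ 𝔞) : ℝ) with hrr
  set Q0 : ℝ := ∏ P ∈ T, (1 - ((Nat.card (A ⧸ P) : ℝ))⁻¹) with hQ0
  set Q2 : ℝ := ∏ P ∈ T, ∏ i ∈ Icc 2 r, (1 - ((Nat.card (A ⧸ P) : ℝ))⁻¹ ^ i) with hQ2
  set Q1 : ℝ := ∏ P ∈ T, ∏ i ∈ Icc 1 r, (1 - ((Nat.card (A ⧸ P) : ℝ))⁻¹ ^ i) with hQ1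
  have hrrpos : (0:ℝ) < rr := by rw [hrr]; exact_mod_cast Nat.card_pos
  have hQ0pos : 0 < Q0 := by
    refine Finset.prod_pos fun P hP => ?_
    have := (hfactor01 P hP 1 le_rfl).1
    rwa [pow_one] at this
  have hQ2pos : 0 < Q2 :=
    Finset.prod_pos fun P hP => Finset.prod_pos fun i hi =>
      (hfactor01 P hP i (by have := (mem_Icc.mp hi).1; omega)).1
  have hQ2le1 : Q2 ≤ 1 :=
    Finset.prod_le_one
      (fun P hP => Finset.prod_nonneg fun i hi =>
        (hfactor01 P hP i (by have := (mem_Icc.mp hi).1; omega)).1.le)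
      (fun P hP => Finset.prod_le_one
        (fun i hi => (hfactor01 P hP i (by have := (mem_Icc.mp hi).1; omega)).1.le)
        (fun i hi => (hfactor01 P hP i (by have := (mem_Icc.mp hi).1; omega)).2))
  have hQsplit : Q1 = Q0 * Q2 := by
    rw [hQ0, hQ2, hQ1, ← Finset.prod_mul_distrib]
    refine Finset.prod_congr rfl fun P hP => ?_
    have hIcc : Icc 1 r = insert 1 (Icc 2 r) := by
      ext x; simp only [mem_Icc, mem_insert]; omega
    rw [hIcc, Finset.prod_insert (by simp), pow_one]
  -- the finprod in the statement equals Q2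
  have hfp : (∏ᶠ (𝔭 : Ideal A) (_ : 𝔭.IsPrime ∧ 𝔞 ≤ 𝔭),
      ∏ i ∈ Finset.Icc 2 r, (1 - ((Nat.card (A ⧸ 𝔭) : ℝ))⁻¹ ^ i)) = Q2 := by
    rw [hQ2]
    refine finprod_cond_eq_prod_of_cond_iff _ ?_
    intro x _
    rw [hT, Multiset.mem_toFinset, factors_eq_normalizedFactors,
      Ideal.mem_normalizedFactors_iff h𝔞]
  -- global counting
  have hGL : (Nat.card (Matrix.GeneralLinearGroup (Fin r) (A ⧸ 𝔞)) : ℝ) = rr ^ (r ^ 2) * Q1 :=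
    (global_counts 𝔞 h𝔞 r).1
  have hU : (Nat.card (A ⧸ 𝔞)ˣ : ℝ) = rr * Q0 := (global_counts 𝔞 h𝔞 r).2
  have hpow' : rr ^ (r ^ 2) = rr ^ (r ^ 2 - 1) * rr := by
    rw [← pow_succ]
    congr 1
    have h1 : 1 ≤ r ^ 2 := Nat.one_le_pow _ _ (by omega)
    omega
  have hglr : (Nat.card (Matrix.GeneralLinearGroup (Fin r) (A ⧸ 𝔞)) : ℝ) =
      rr ^ (r ^ 2 - 1) * rr * Q0 * Q2 := by
    rw [hGL, hQsplit, hpow']; ring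
  -- group theory
  set Z := scalarSubgroup (Fin r) (A ⧸ 𝔞) with hZ
  haveI hZn : Z.Normal := scalarSubgroup_normal
  have hZcard : Nat.card Z = Nat.card (A ⧸ 𝔞)ˣ :=
    card_scalarSubgroup ⟨⟨0, by omega⟩⟩
  set φ := (QuotientGroup.mk' Z).comp G.subtype with hφ
  have hkerφ : φ.ker = Z.subgroupOf G := by
    ext x
    simp [hφ, MonoidHom.mem_ker, QuotientGroup.eq_one_iff, Subgroup.mem_subgroupOf]
  have hkercard : Nat.card φ.ker = Nat.card (G ⊓ Z : Subgroup _) := by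
    rw [hkerφ]; exact Nat.card_congr (infEquiv G Z)
  have hGsplit : Nat.card G = Nat.card (G ⊓ Z : Subgroup _) * Nat.card φ.range := by
    rw [← hkercard]; exact card_eq_ker_mul_range φ
  have hrange_le : Nat.card φ.range ≤
      Nat.card (Matrix.GeneralLinearGroup (Fin r) (A ⧸ 𝔞) ⧸ Z) :=
    Nat.card_le_card_of_injective _ (Subgroup.subtype_injective _)
  have hLagrange : Nat.card (Matrix.GeneralLinearGroup (Fin r) (A ⧸ 𝔞)) =
      Nat.card (Matrix.GeneralLinearGroup (Fin r) (A ⧸ 𝔞) ⧸ Z) * Nat.card Z :=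
    Subgroup.card_eq_card_quotient_mul_card_subgroup Z
  -- kernel of glFactor is contained in G
  have hkerle : (glFactor r 𝔞 𝔪).ker ≤ G := by
    rw [hG]
    intro x hx
    rw [Subgroup.mem_comap, MonoidHom.mem_ker.mp hx]
    exact Subgroup.one_mem _
  have hker_le_G : Nat.card (glFactor r 𝔞 𝔪).ker ≤ Nat.card G :=
    Subgroup.card_le_of_le hkerle
  have hGLsplit : Nat.card (Matrix.GeneralLinearGroup (Fin r) (A ⧸ 𝔞)) =
      Nat.card (glFactor r 𝔞 𝔪).ker * Nat.card (glFactor r 𝔞 𝔪).range :=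
    card_eq_ker_mul_range _
  have hrangeS : Nat.card (glFactor r 𝔞 𝔪).range ≤ Nat.card (A ⧸ (𝔞 ⊔ 𝔪)) ^ (r * r) := by
    calc Nat.card (glFactor r 𝔞 𝔪).range
        ≤ Nat.card (Matrix.GeneralLinearGroup (Fin r) (A ⧸ (𝔞 ⊔ 𝔪))) :=
          Nat.card_le_card_of_injective _ (Subgroup.subtype_injective _)
      _ ≤ Nat.card (Matrix (Fin r) (Fin r) (A ⧸ (𝔞 ⊔ 𝔪))) :=
          Nat.card_le_card_of_injective Units.val Units.val_injective
      _ = Nat.card (A ⧸ (𝔞 ⊔ 𝔪)) ^ (r * r) := by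
          rw [show (Matrix (Fin r) (Fin r) (A ⧸ (𝔞 ⊔ 𝔪))) =
              (Fin r → Fin r → (A ⧸ (𝔞 ⊔ 𝔪))) from rfl,
            Nat.card_fun, Nat.card_fun, Nat.card_eq_fintype_card (α := Fin r),
            Fintype.card_fin, ← pow_mul]
  have hScard : Nat.card (A ⧸ (𝔞 ⊔ 𝔪)) ≤ Nat.card (A ⧸ 𝔪) := by
    refine Nat.card_le_card_of_surjective (Ideal.Quotient.factor (S := 𝔪) (T := 𝔞 ⊔ 𝔪) le_sup_right) ?_
    intro x
    obtain ⟨a, rfl⟩ := Ideal.Quotient.mk_surjective x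
    exact ⟨Ideal.Quotient.mk _ a, Ideal.Quotient.factor_mk _ _⟩
  -- real versions
  have hsz : (Nat.card (G ⊓ Z : Subgroup _) : ℝ) ≤ rr * Q0 := by
    rw [← hU, ← hZcard]
    exact_mod_cast Subgroup.card_le_of_le inf_le_right
  have hspos : (0:ℝ) ≤ (Nat.card (G ⊓ Z : Subgroup _) : ℝ) := by positivity
  have hzpos : (0:ℝ) < rr * Q0 := by positivity
  have hkq : (Nat.card (Matrix.GeneralLinearGroup (Fin r) (A ⧸ 𝔞) ⧸ Z) : ℝ) =
      rr ^ (r ^ 2 - 1) * Q2 := by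
    have h1 : (Nat.card (Matrix.GeneralLinearGroup (Fin r) (A ⧸ 𝔞) ⧸ Z) : ℝ) * (rr * Q0) =
        (rr ^ (r ^ 2 - 1) * Q2) * (rr * Q0) := by
      rw [← hU, ← hZcard]
      calc (Nat.card (Matrix.GeneralLinearGroup (Fin r) (A ⧸ 𝔞) ⧸ Z) : ℝ) * (Nat.card Z : ℝ)
          = (Nat.card (Matrix.GeneralLinearGroup (Fin r) (A ⧸ 𝔞)) : ℝ) := by
            exact_mod_cast (congrArg (Nat.cast (R := ℝ)) hLagrange).symm
        _ = (rr ^ (r ^ 2 - 1) * Q2) * ((Nat.card Z : ℝ)) := by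
            rw [hglr, hZcard, hU]; ring
    exact mul_right_cancel₀ (ne_of_gt hzpos) h1
  constructor
  · -- lower bound
    rw [hfp]
    have hkerreal : ((Nat.card (A ⧸ 𝔪) : ℝ) ^ (r * r))⁻¹ *
        (Nat.card (Matrix.GeneralLinearGroup (Fin r) (A ⧸ 𝔞)) : ℝ) ≤
          (Nat.card (glFactor r 𝔞 𝔪).ker : ℝ) := by
      rw [inv_mul_le_iff₀ (by positivity)]
      calc (Nat.card (Matrix.GeneralLinearGroup (Fin r) (A ⧸ 𝔞)) : ℝ)
          = (Nat.card (glFactor r 𝔞 𝔪).ker : ℝ) * (Nat.card (glFactor r 𝔞 𝔪).range : ℝ) := by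
            exact_mod_cast congrArg (Nat.cast (R := ℝ)) hGLsplit
        _ ≤ (Nat.card (glFactor r 𝔞 𝔪).ker : ℝ) * ((Nat.card (A ⧸ 𝔪) : ℝ) ^ (r * r)) := by
            have h2 : (Nat.card (glFactor r 𝔞 𝔪).range : ℝ) ≤ (Nat.card (A ⧸ 𝔪) : ℝ) ^ (r * r) := by
              exact_mod_cast hrangeS.trans (Nat.pow_le_pow_left hScard _)
            have h3 : (0:ℝ) ≤ (Nat.card (glFactor r 𝔞 𝔪).ker : ℝ) := by positivity
            exact mul_le_mul_of_nonneg_left h2 h3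
        _ = (Nat.card (A ⧸ 𝔪) : ℝ) ^ (r * r) * (Nat.card (glFactor r 𝔞 𝔪).ker : ℝ) := by ring
    calc ((Nat.card (A ⧸ 𝔪) : ℝ) ^ (r * r))⁻¹ * rr ^ (r ^ 2 - 1) * Q2 *
          (Nat.card (G ⊓ Z : Subgroup _) : ℝ)
        ≤ ((Nat.card (A ⧸ 𝔪) : ℝ) ^ (r * r))⁻¹ * rr ^ (r ^ 2 - 1) * Q2 * (rr * Q0) := by
          have : (0:ℝ) ≤ ((Nat.card (A ⧸ 𝔪) : ℝ) ^ (r * r))⁻¹ * rr ^ (r ^ 2 - 1) * Q2 := by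
            positivity
          exact mul_le_mul_of_nonneg_left hsz this
      _ = ((Nat.card (A ⧸ 𝔪) : ℝ) ^ (r * r))⁻¹ *
            (Nat.card (Matrix.GeneralLinearGroup (Fin r) (A ⧸ 𝔞)) : ℝ) := by
          rw [hglr]; ring
      _ ≤ (Nat.card (glFactor r 𝔞 𝔪).ker : ℝ) := hkerreal
      _ ≤ (Nat.card G : ℝ) := by exact_mod_cast hker_le_G
  · -- upper bound
    calc (Nat.card G : ℝ)
        = (Nat.card (G ⊓ Z : Subgroup _) : ℝ) * (Nat.card φ.range : ℝ) := by
          exact_mod_cast congrArg (Nat.cast (R := ℝ)) hGsplit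
      _ ≤ (Nat.card (G ⊓ Z : Subgroup _) : ℝ) *
            (Nat.card (Matrix.GeneralLinearGroup (Fin r) (A ⧸ 𝔞) ⧸ Z) : ℝ) := by
          exact mul_le_mul_of_nonneg_left (by exact_mod_cast hrange_le) hspos
      _ = (Nat.card (G ⊓ Z : Subgroup _) : ℝ) * (rr ^ (r ^ 2 - 1) * Q2) := by rw [hkq]
      _ ≤ (Nat.card (G ⊓ Z : Subgroup _) : ℝ) * (rr ^ (r ^ 2 - 1) * 1) := by
          have h4 : rr ^ (r ^ 2 - 1) * Q2 ≤ rr ^ (r ^ 2 - 1) * 1 :=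
            mul_le_mul_of_nonneg_left hQ2le1 (by positivity)
          exact mul_le_mul_of_nonneg_left h4 hspos
      _ = rr ^ (r ^ 2 - 1) * (Nat.card (G ⊓ Z : Subgroup _) : ℝ) := by ring
end

section
/- Let r ≥ 1 and a ≥ 1 be integers. Then |GL_r(ℤ/aℤ)| = φ(a) · a^(r²−1) · ∏_{p prime, p ∣ a} ∏_{i=2}^{r} (1 − p^(−i)), where φ is Euler's totient function, the equality is an equality of rational numbers, and the outer product runs over the distinct prime divisors of a. Equivalently, since the subgroup of scalar matrices of GL_r(ℤ/aℤ) has order φ(a), the quotient PGL_r(ℤ/aℤ) of GL_r(ℤ/aℤ) by its scalar matrices has order a^(r²−1) · ∏_{p ∣ a} ∏_{i=2}^{r} (1 − p^(−i)). -/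
open Matrix Finset

variable {n : Type*} [DecidableEq n] [Fintype n]

/-- Matrices over a product ring split as a product of matrix rings. -/
def matrixProdRingEquiv (R S : Type*) [Ring R] [Ring S] :
    Matrix n n (R × S) ≃+* Matrix n n R × Matrix n n S where
  toFun M := ((RingHom.fst R S).mapMatrix M, (RingHom.snd R S).mapMatrix M)
  invFun P := Matrix.of fun i j => (P.1 i j, P.2 i j)
  left_inv M := by ext i j <;> rfl
  right_inv P := by
    refine Prod.ext ?_ ?_ <;> ext i j <;> rfl
  map_mul' M N := Prod.ext (map_mul (RingHom.fst R S).mapMatrix M N)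
    (map_mul (RingHom.snd R S).mapMatrix M N)
  map_add' M N := Prod.ext (map_add (RingHom.fst R S).mapMatrix M N)
    (map_add (RingHom.snd R S).mapMatrix M N)

lemma card_GL_congr {R S : Type*} [CommRing R] [CommRing S] (e : R ≃+* S) :
    Nat.card (GL n R) = Nat.card (GL n S) :=
  Nat.card_congr (Units.mapEquiv e.mapMatrix.toMulEquiv).toEquiv

lemma card_GL_mul (r m k : ℕ) (h : Nat.Coprime m k) :
    Nat.card (GL (Fin r) (ZMod (m * k))) =
      Nat.card (GL (Fin r) (ZMod m)) * Nat.card (GL (Fin r) (ZMod k)) := by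
  rw [card_GL_congr (ZMod.chineseRemainder h)]
  rw [Nat.card_congr ((Units.mapEquiv (matrixProdRingEquiv (ZMod m) (ZMod k)).toMulEquiv).trans
      MulEquiv.prodUnits).toEquiv]
  exact Nat.card_prod _ _

lemma zmod_isUnit_iff_cast {p k : ℕ} (hp : p.Prime) (hk : k ≠ 0) (x : ZMod (p^k)) :
    IsUnit x ↔ IsUnit (ZMod.castHom (dvd_pow_self p hk) (ZMod p) x) := by
  have : NeZero (p ^ k) := ⟨pow_ne_zero _ hp.ne_zero⟩
  obtain ⟨m, rfl⟩ := ZMod.natCast_zmod_surjective (n := p ^ k) x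
  rw [map_natCast, ZMod.isUnit_iff_coprime, ZMod.isUnit_iff_coprime,
    Nat.coprime_pow_right_iff (Nat.pos_of_ne_zero hk)]

variable {r : ℕ}

lemma matrix_isUnit_iff_cast {p k : ℕ} (hp : p.Prime) (hk : k ≠ 0)
    (M : Matrix (Fin r) (Fin r) (ZMod (p^k))) :
    IsUnit M ↔ IsUnit ((ZMod.castHom (dvd_pow_self p hk) (ZMod p)).mapMatrix M) := by
  rw [Matrix.isUnit_iff_isUnit_det, Matrix.isUnit_iff_isUnit_det,
    ← RingHom.map_det, ← zmod_isUnit_iff_cast hp hk]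

lemma card_matrix_zmod (r m : ℕ) (hm : m ≠ 0) :
    Nat.card (Matrix (Fin r) (Fin r) (ZMod m)) = m ^ (r ^ 2) := by
  have : NeZero m := ⟨hm⟩
  rw [Nat.card_eq_fintype_card]
  show Fintype.card (Fin r → Fin r → ZMod m) = m ^ r ^ 2
  rw [Fintype.card_fun, Fintype.card_fun, ZMod.card, Fintype.card_fin, ← pow_mul, sq]

lemma card_GL_primePow (r p k : ℕ) (hp : p.Prime) (hk : k ≠ 0) :
    Nat.card (GL (Fin r) (ZMod (p ^ k))) =
      p ^ ((k - 1) * r ^ 2) * Nat.card (GL (Fin r) (ZMod p)) := by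
  have hpf : Fact p.Prime := ⟨hp⟩
  set f : Matrix (Fin r) (Fin r) (ZMod (p ^ k)) →+* Matrix (Fin r) (Fin r) (ZMod p) :=
    (ZMod.castHom (dvd_pow_self p hk) (ZMod p)).mapMatrix with hf
  have : NeZero (p ^ k) := ⟨pow_ne_zero _ hp.ne_zero⟩
  have hfsurj : Function.Surjective f := by
    intro N
    refine ⟨Matrix.of fun i j => ((N i j).val : ZMod (p ^ k)), ?_⟩
    ext i j
    simp [hf, ZMod.natCast_rightInverse (N i j)]
  set Φ : GL (Fin r) (ZMod (p ^ k)) →* GL (Fin r) (ZMod p) := Units.map f.toMonoidHom with hΦ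
  have hΦsurj : Function.Surjective Φ := by
    intro N
    obtain ⟨M, hM⟩ := hfsurj N.val
    have hMu : IsUnit M := by
      rw [matrix_isUnit_iff_cast hp hk, hM]; exact N.isUnit
    refine ⟨hMu.unit, Units.ext ?_⟩
    show f hMu.unit.val = N.val
    rw [IsUnit.unit_spec, hM]
  have h1 : Nat.card (GL (Fin r) (ZMod (p ^ k))) =
      Nat.card (GL (Fin r) (ZMod p)) * Nat.card Φ.ker := by
    rw [Subgroup.card_eq_card_quotient_mul_card_subgroup Φ.ker,
      Nat.card_congr (QuotientGroup.quotientKerEquivOfSurjective Φ hΦsurj).toEquiv]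
  have hMu : ∀ M : {M : Matrix (Fin r) (Fin r) (ZMod (p ^ k)) // f M = 1}, IsUnit M.1 :=
    fun M => by rw [matrix_isUnit_iff_cast hp hk, M.2]; exact isUnit_one
  have e1 : Φ.ker ≃ {M : Matrix (Fin r) (Fin r) (ZMod (p ^ k)) // f M = 1} := by
    refine ⟨fun U => ⟨U.1.val, ?_⟩, fun M => ⟨(hMu M).unit, ?_⟩,
      fun U => Subtype.ext (Units.ext ((hMu _).unit_spec)),
      fun M => Subtype.ext ((hMu M).unit_spec)⟩
    · have h2 := U.2
      rw [MonoidHom.mem_ker, Units.ext_iff] at h2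
      exact h2
    · rw [MonoidHom.mem_ker]
      refine Units.ext ?_
      show f (hMu M).unit.val = 1
      rw [IsUnit.unit_spec, M.2]
  have e2 : {M : Matrix (Fin r) (Fin r) (ZMod (p ^ k)) // f M = 1} ≃
      {M : Matrix (Fin r) (Fin r) (ZMod (p ^ k)) // f M = 0} := by
    refine ⟨fun M => ⟨M.1 - 1, by simp [map_sub, M.2]⟩,
      fun M => ⟨M.1 + 1, by simp [map_add, M.2]⟩, ?_, ?_⟩
    · intro M; exact Subtype.ext (by simp)
    · intro M; exact Subtype.ext (by simp)
  have e3 : {M : Matrix (Fin r) (Fin r) (ZMod (p ^ k)) // f M = 0} ≃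
      f.toAddMonoidHom.ker :=
    Equiv.subtypeEquivRight (by intro M; simp [AddMonoidHom.mem_ker])
  have h4 : Nat.card (Matrix (Fin r) (Fin r) (ZMod (p ^ k))) =
      Nat.card (Matrix (Fin r) (Fin r) (ZMod p)) * Nat.card f.toAddMonoidHom.ker := by
    rw [AddSubgroup.card_eq_card_quotient_mul_card_addSubgroup f.toAddMonoidHom.ker,
      Nat.card_congr (QuotientAddGroup.quotientKerEquivOfSurjective f.toAddMonoidHom hfsurj).toEquiv]
  rw [card_matrix_zmod r _ (pow_ne_zero _ hp.ne_zero), card_matrix_zmod r _ hp.ne_zero] at h4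
  have hker : Nat.card f.toAddMonoidHom.ker = p ^ ((k - 1) * r ^ 2) := by
    have hk1 : (p : ℕ) ^ (k * r ^ 2) = p ^ (r ^ 2) * p ^ ((k - 1) * r ^ 2) := by
      rw [← pow_add]
      congr 1
      have : 1 ≤ k := Nat.pos_of_ne_zero hk
      nlinarith [Nat.sub_add_cancel this]
    rw [← pow_mul] at h4
    rw [hk1] at h4
    exact (Nat.eq_of_mul_eq_mul_left (pow_pos hp.pos _) h4).symm
  rw [h1, Nat.card_congr (e1.trans (e2.trans e3)), hker, Nat.mul_comm]

lemma prod_GL_field_Q (p r : ℕ) (hp : 1 < p) :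
    (∏ i : Fin r, ((p : ℚ) ^ r - (p : ℚ) ^ (i : ℕ))) =
      (p : ℚ) ^ (r ^ 2) * ∏ i ∈ Finset.Icc 1 r, (1 - ((p : ℚ))⁻¹ ^ i) := by
  have hp0 : (p : ℚ) ≠ 0 := by positivity
  have key : ∀ i ∈ Finset.range r, (p : ℚ) ^ r - (p : ℚ) ^ i
      = (p : ℚ) ^ r * (1 - ((p : ℚ))⁻¹ ^ (r - i)) := by
    intro i hi
    rw [Finset.mem_range] at hi
    rw [mul_sub, mul_one, inv_pow]
    congr 1
    rw [eq_comm, mul_inv_eq_iff_eq_mul₀ (by positivity), ← pow_add]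
    congr 1
    omega
  rw [Fin.prod_univ_eq_prod_range (fun i => (p : ℚ) ^ r - (p : ℚ) ^ i) r,
    Finset.prod_congr rfl key, Finset.prod_mul_distrib, Finset.prod_const,
    Finset.card_range, ← pow_mul, ← sq]
  congr 1
  refine Finset.prod_bij' (fun i _ => r - i) (fun j _ => r - j) ?_ ?_ ?_ ?_ ?_ <;>
    simp only [Finset.mem_range, Finset.mem_Icc] <;> intros
  case _ => omega
  case _ => omega
  case _ => omega
  case _ => omega
  case _ => trivial

lemma card_GL_primePow_Q (r p k : ℕ) (hp : p.Prime) (hk : k ≠ 0) :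
    (Nat.card (GL (Fin r) (ZMod (p ^ k))) : ℚ) =
      ((p : ℚ) ^ k) ^ (r ^ 2) * ∏ i ∈ Finset.Icc 1 r, (1 - ((p : ℚ))⁻¹ ^ i) := by
  have hpf : Fact p.Prime := ⟨hp⟩
  have hq : Fintype.card (ZMod p) = p := ZMod.card p
  rw [card_GL_primePow r p k hp hk, Matrix.card_GL_field, Nat.cast_mul, Nat.cast_prod]
  have hcast : ∀ i : Fin r, ((Fintype.card (ZMod p) ^ r - Fintype.card (ZMod p) ^ (i : ℕ) : ℕ) : ℚ)
      = (p : ℚ) ^ r - (p : ℚ) ^ (i : ℕ) := by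
    intro i
    rw [hq, Nat.cast_sub (Nat.pow_le_pow_right hp.one_lt.le i.2.le)]
    push_cast [hq]
    ring
  rw [Finset.prod_congr rfl (fun i _ => hcast i), prod_GL_field_Q p r hp.one_lt,
    Nat.cast_pow, ← mul_assoc, ← pow_mul, ← pow_add]
  obtain ⟨k', rfl⟩ : ∃ k', k = k' + 1 := ⟨k - 1, by omega⟩
  congr 2
  simp [Nat.add_mul]

lemma card_GL_zmod_Q (r a : ℕ) (ha : a ≠ 0) :
    (Nat.card (GL (Fin r) (ZMod a)) : ℚ) =
      (a : ℚ) ^ (r ^ 2) *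
        ∏ p ∈ a.primeFactors, ∏ i ∈ Finset.Icc 1 r, (1 - ((p : ℚ))⁻¹ ^ i) := by
  revert ha
  induction a using Nat.recOnPosPrimePosCoprime with
  | prime_pow p n hp hn =>
      intro _
      rw [card_GL_primePow_Q r p n hp hn.ne', Nat.primeFactors_prime_pow hn.ne' hp,
        Finset.prod_singleton]
      push_cast
      ring
  | zero => intro h; exact absurd rfl h
  | one =>
      intro _
      have : Subsingleton (GL (Fin r) (ZMod 1)) := inferInstance
      rw [Nat.card_of_subsingleton (1 : GL (Fin r) (ZMod 1))]
      simp
  | coprime a b ha1 hb1 hab iha ihb =>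
      intro _
      have ha0 : a ≠ 0 := by omega
      have hb0 : b ≠ 0 := by omega
      rw [card_GL_mul r a b hab, Nat.cast_mul, iha ha0, ihb hb0,
        hab.primeFactors_mul, Finset.prod_union hab.disjoint_primeFactors]
      push_cast
      ring


/-- For `r ≥ 1` and `a ≥ 1`,
`|GL_r(ℤ/aℤ)| = φ(a) · a^(r²−1) · ∏_{p ∣ a prime} ∏_{i=2}^{r} (1 − p^(−i))` (in `ℚ`);
equivalently, the subgroup of scalar matrices of `GL_r(ℤ/aℤ)` has order `φ(a)` and the
quotient `PGL_r(ℤ/aℤ)` by the scalar matrices has order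
`a^(r²−1) · ∏_{p ∣ a} ∏_{i=2}^{r} (1 − p^(−i))`. -/
theorem card_GL_and_PGL_ZMod (r a : ℕ) (hr : 1 ≤ r) (ha : 1 ≤ a) :
    (Nat.card (Matrix.GeneralLinearGroup (Fin r) (ZMod a)) : ℚ) =
      (Nat.totient a : ℚ) * (a : ℚ) ^ (r ^ 2 - 1) *
        ∏ p ∈ a.primeFactors, ∏ i ∈ Finset.Icc 2 r, (1 - ((p : ℚ))⁻¹ ^ i) ∧
    Nat.card (scalarSubgroup (Fin r) (ZMod a)) = Nat.totient a ∧
    (Nat.card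
        (Matrix.GeneralLinearGroup (Fin r) (ZMod a) ⧸ scalarSubgroup (Fin r) (ZMod a)) : ℚ) =
      (a : ℚ) ^ (r ^ 2 - 1) *
        ∏ p ∈ a.primeFactors, ∏ i ∈ Finset.Icc 2 r, (1 - ((p : ℚ))⁻¹ ^ i) := by
  have ha0 : a ≠ 0 := by omega
  have : NeZero a := ⟨ha0⟩
  have hsplit : ∀ p : ℕ, ∏ i ∈ Finset.Icc 1 r, (1 - ((p : ℚ))⁻¹ ^ i)
      = (1 - (p : ℚ)⁻¹) * ∏ i ∈ Finset.Icc 2 r, (1 - ((p : ℚ))⁻¹ ^ i) := by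
    intro p
    rw [← Finset.Ico_add_one_right_eq_Icc 1 r, Finset.prod_eq_prod_Ico_succ_bot (by omega), pow_one,
      Finset.Ico_add_one_right_eq_Icc]
  have key : (Nat.card (Matrix.GeneralLinearGroup (Fin r) (ZMod a)) : ℚ) =
      (Nat.totient a : ℚ) * (a : ℚ) ^ (r ^ 2 - 1) *
        ∏ p ∈ a.primeFactors, ∏ i ∈ Finset.Icc 2 r, (1 - ((p : ℚ))⁻¹ ^ i) := by
    rw [card_GL_zmod_Q r a ha0, Finset.prod_congr rfl (fun p _ => hsplit p),
      Finset.prod_mul_distrib, Nat.totient_eq_mul_prod_factors]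
    have hsq : (a : ℚ) ^ (r ^ 2) = (a : ℚ) * (a : ℚ) ^ (r ^ 2 - 1) := by
      rw [← pow_succ']
      congr 1
      have : 1 ≤ r ^ 2 := by nlinarith
      omega
    rw [hsq]
    ring
  have hne : Nonempty (Fin r) := ⟨⟨0, hr⟩⟩
  have hinj : Function.Injective ((Units.map (Matrix.scalar (Fin r)).toMonoidHom :
      (ZMod a)ˣ →* Matrix.GeneralLinearGroup (Fin r) (ZMod a))) := by
    refine Units.map_injective ?_
    intro x y h
    exact Matrix.scalar_inj.mp h
  have h2 : Nat.card (scalarSubgroup (Fin r) (ZMod a)) = Nat.totient a := by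
    have := Nat.card_congr (MonoidHom.ofInjective hinj).toEquiv
    rw [scalarSubgroup, ← this, Nat.card_eq_fintype_card, ZMod.card_units_eq_totient]
  have hq := Subgroup.card_eq_card_quotient_mul_card_subgroup (scalarSubgroup (Fin r) (ZMod a))
  rw [h2] at hq
  have hφ : ((Nat.totient a : ℚ)) ≠ 0 := by
    have := Nat.totient_pos.mpr (by omega : 0 < a)
    positivity
  refine ⟨key, h2, ?_⟩
  have hcast := congrArg (Nat.cast : ℕ → ℚ) hq
  push_cast at hcast
  rw [key] at hcast
  have := mul_right_cancel₀ hφ (hcast.symm.trans (by ring :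
    (Nat.totient a : ℚ) * (a : ℚ) ^ (r ^ 2 - 1) *
      ∏ p ∈ a.primeFactors, ∏ i ∈ Finset.Icc 2 r, (1 - ((p : ℚ))⁻¹ ^ i)
    = ((a : ℚ) ^ (r ^ 2 - 1) *
      ∏ p ∈ a.primeFactors, ∏ i ∈ Finset.Icc 2 r, (1 - ((p : ℚ))⁻¹ ^ i)) * Nat.totient a))
  exact this
end
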